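/- Let V be a finite nonempty type (the vocabulary), let t ≥ 1 be an integer, let u_j : V → ℝ for j = 1, …, t−1, let π' and π_{t−1} be full-support probability vectors on V, and let λ > 0 and η > 0. Consider the FTRL objective G(π) = ∑_{j=1}^{t−1} ( ∑_{a ∈ V} π(a)·u_j(a) − λ·KL(π‖π') ) − (1/η)·KL(π‖π_{t−1}) over probability vectors π on V. Then G has a unique maximizer π_t over probability vectors on V, given in closed form by π_t(a) = exp( (η·∑_{j=1}^{t−1} u_j(a) + (t−1)·λ·η·log π'(a) + log π_{t−1}(a)) / ((t−1)·λ·η + 1) ) / Z, where Z = ∑_{a' ∈ V} exp( (η·∑_{j=1}^{t−1} u_j(a') + (t−1)·λ·η·log π'(a') + log π_{t−1}(a')) / ((t−1)·λ·η + 1) ). -/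
import Mathlib


open Finset Real

/-- Kullback–Leibler divergence between finitely supported probability vectors.
Terms with `p y = 0` vanish since `0 * log _ = 0`. -/
noncomputable def KL {Y : Type*} [Fintype Y] (p q : Y → ℝ) : ℝ :=
  ∑ y, p y * Real.log (p y / q y)

lemma gibbs_term_lt {p q : ℝ} (hp : 0 < p) (hq : 0 < q) (hne : p ≠ q) :
    0 < p * Real.log (p / q) - p + q := by
  have h1 : Real.log (q / p) < q / p - 1 := by
    refine Real.log_lt_sub_one_of_pos (div_pos hq hp) ?_
    intro h
    rw [div_eq_one_iff_eq hp.ne'] at h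
    exact hne h.symm
  have h2 : Real.log (p / q) = - Real.log (q / p) := by
    rw [← Real.log_inv, inv_div]
  have h3 : p * (q / p) = q := by field_simp
  nlinarith [mul_lt_mul_of_pos_left h1 hp]

lemma gibbs_term_le {p q : ℝ} (hp : 0 ≤ p) (hq : 0 < q) :
    0 ≤ p * Real.log (p / q) - p + q := by
  rcases eq_or_ne p q with rfl | hne
  · rw [div_self hq.ne', Real.log_one]; ring_nf; exact le_refl 0
  rcases hp.lt_or_eq with h | h
  · exact (gibbs_term_lt h hq hne).le
  · rw [← h]; simpa using hq.le

lemma gibbs_term_eq {p q : ℝ} (hp : 0 ≤ p) (hq : 0 < q) :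
    p * Real.log (p / q) - p + q = 0 ↔ p = q := by
  constructor
  · intro heq
    by_contra h'
    rcases hp.lt_or_eq with h | h
    · exact (gibbs_term_lt h hq h').ne' heq
    · rw [← h] at heq; simp at heq; exact hq.ne' heq
  · intro h; subst h; rw [div_self hq.ne', Real.log_one]; ring

lemma gibbs {V : Type*} [Fintype V] {p q : V → ℝ} (hp : ∀ a, 0 ≤ p a) (hps : ∑ a, p a = 1)
    (hq : ∀ a, 0 < q a) (hqs : ∑ a, q a = 1) :
    0 ≤ KL p q ∧ (KL p q = 0 ↔ p = q) := by
  have hsum : KL p q = ∑ a, (p a * Real.log (p a / q a) - p a + q a) := by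
    simp [KL, Finset.sum_add_distrib, Finset.sum_sub_distrib, hps, hqs]
  have hterm : ∀ a ∈ Finset.univ, 0 ≤ p a * Real.log (p a / q a) - p a + q a :=
    fun a _ => gibbs_term_le (hp a) (hq a)
  constructor
  · rw [hsum]; exact Finset.sum_nonneg hterm
  · rw [hsum, Finset.sum_eq_zero_iff_of_nonneg hterm]
    constructor
    · intro h
      funext a
      exact (gibbs_term_eq (hp a) (hq a)).mp (h a (Finset.mem_univ a))
    · intro h a _
      exact (gibbs_term_eq (hp a) (hq a)).mpr (congrFun h a)

/-- The FTRL objective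
`G(π) = ∑_{j=1}^{t−1} (∑_a π a * u j a − λ KL(π‖πa)) − (1/η) KL(π‖π_{t−1})`
has the stated softmax closed form as its unique maximizer over probability vectors. -/
theorem ftrl_closed_form
    {V : Type*} [Fintype V] [Nonempty V]
    (t : ℕ) (ht : 1 ≤ t) (u : Fin (t - 1) → V → ℝ)
    (πa πprev : V → ℝ)
    (hπa_pos : ∀ a, 0 < πa a) (hπa_sum : ∑ a, πa a = 1)
    (hπprev_pos : ∀ a, 0 < πprev a) (hπprev_sum : ∑ a, πprev a = 1)
    (lam η : ℝ) (hlam : 0 < lam) (hη : 0 < η)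
    (G : (V → ℝ) → ℝ)
    (hG : ∀ ρ : V → ℝ, G ρ =
      (∑ j : Fin (t - 1), ((∑ a, ρ a * u j a) - lam * KL ρ πa)) - (1 / η) * KL ρ πprev)
    (Z : ℝ)
    (hZ : Z = ∑ a', Real.exp
      ((η * (∑ j, u j a') + ((t : ℝ) - 1) * lam * η * Real.log (πa a') + Real.log (πprev a')) /
        (((t : ℝ) - 1) * lam * η + 1)))
    (πt : V → ℝ)
    (hπt : ∀ a, πt a = Real.exp
      ((η * (∑ j, u j a) + ((t : ℝ) - 1) * lam * η * Real.log (πa a) + Real.log (πprev a)) /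
        (((t : ℝ) - 1) * lam * η + 1)) / Z) :
    ((∀ a, 0 ≤ πt a) ∧ ∑ a, πt a = 1) ∧
    (∀ ρ : V → ℝ, (∀ a, 0 ≤ ρ a) → ∑ a, ρ a = 1 →
      (G ρ ≤ G πt ∧ (G ρ = G πt ↔ ρ = πt))) := by
  have ht1 : (1:ℝ) ≤ (t:ℝ) := by exact_mod_cast ht
  set c : ℝ := ((t:ℝ) - 1) * lam * η + 1 with hc
  have hc0 : 0 < c := by
    rw [hc]
    have h1 : 0 ≤ ((t:ℝ)-1) * lam * η := mul_nonneg (mul_nonneg (by linarith) hlam.le) hη.le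
    linarith
  have hcne : ((t:ℝ)-1) * lam * η + 1 ≠ 0 := by rw [← hc]; exact hc0.ne'
  set κ : ℝ := ((t:ℝ) - 1) * lam + 1/η with hκ
  have hκ0 : 0 < κ := by
    rw [hκ]
    have h1 : 0 ≤ ((t:ℝ)-1) * lam := mul_nonneg (by linarith) hlam.le
    have h2 : 0 < 1/η := by positivity
    linarith
  set f : V → ℝ := fun a =>
    (η * (∑ j, u j a) + ((t:ℝ)-1) * lam * η * Real.log (πa a) + Real.log (πprev a)) / c with hf
  have hfa : ∀ a, f a =
      (η * (∑ j, u j a) + ((t:ℝ)-1) * lam * η * Real.log (πa a) + Real.log (πprev a)) / c :=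
    fun a => rfl
  have hZ0 : 0 < Z := by
    rw [hZ]
    exact Finset.sum_pos (fun a _ => Real.exp_pos _) Finset.univ_nonempty
  have hπt_pos : ∀ a, 0 < πt a := fun a => by rw [hπt a]; positivity
  have hπt_sum : ∑ a, πt a = 1 := by
    rw [Finset.sum_congr rfl (fun a _ => hπt a), ← Finset.sum_div, ← hZ, div_self hZ0.ne']
  have hlogπt : ∀ a, Real.log (πt a) = f a - Real.log Z := by
    intro a
    rw [hπt a, Real.log_div (Real.exp_ne_zero _) hZ0.ne', Real.log_exp, hfa]
  have hcard : ((t - 1 : ℕ) : ℝ) = (t:ℝ) - 1 := by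
    rw [Nat.cast_sub ht]; norm_num
  -- key identity
  have hGkey : ∀ ρ : V → ℝ, (∀ a, 0 ≤ ρ a) → ∑ a, ρ a = 1 →
      G ρ = κ * (Real.log Z - KL ρ πt) := by
    intro ρ hρ hρs
    rw [hG]
    have e1 : ∑ j : Fin (t - 1), ((∑ a, ρ a * u j a) - lam * KL ρ πa)
        = (∑ a, ρ a * (∑ j, u j a)) - ((t:ℝ) - 1) * lam * KL ρ πa := by
      rw [Finset.sum_sub_distrib, Finset.sum_const, Finset.card_univ, Fintype.card_fin,
        nsmul_eq_mul, hcard, Finset.sum_comm]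
      congr 1
      · exact Finset.sum_congr rfl fun a _ => (Finset.mul_sum _ _ _).symm
      · ring
    rw [e1]
    have e2 : κ * (Real.log Z - KL ρ πt)
        = ∑ a, (κ * ρ a * Real.log Z - κ * (ρ a * Real.log (ρ a / πt a))) := by
      rw [KL, mul_sub, Finset.sum_sub_distrib]
      congr 1
      · simp only [mul_assoc]
        rw [← Finset.mul_sum, ← Finset.sum_mul, hρs, one_mul]
      · rw [← Finset.mul_sum]
    rw [e2, KL, KL, Finset.mul_sum, Finset.mul_sum, ← Finset.sum_sub_distrib,
      ← Finset.sum_sub_distrib]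
    refine Finset.sum_congr rfl fun a _ => ?_
    rcases (hρ a).lt_or_eq with hz | hz
    · rw [Real.log_div hz.ne' (hπa_pos a).ne', Real.log_div hz.ne' (hπprev_pos a).ne',
        Real.log_div hz.ne' (hπt_pos a).ne', hlogπt a, hfa a, hκ, hc]
      field_simp
      ring
    · rw [← hz]; ring
  -- conclusion
  refine ⟨⟨fun a => (hπt_pos a).le, hπt_sum⟩, fun ρ hρ hρs => ?_⟩
  have hKLt : KL πt πt = 0 := by
    rw [KL]
    exact Finset.sum_eq_zero fun a _ => by
      rw [div_self (hπt_pos a).ne', Real.log_one, mul_zero]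
  have hGρ := hGkey ρ hρ hρs
  have hGπt := hGkey πt (fun a => (hπt_pos a).le) hπt_sum
  rw [hKLt, sub_zero] at hGπt
  obtain ⟨hKL0, hKLeq⟩ := gibbs hρ hρs hπt_pos hπt_sum
  constructor
  · rw [hGρ, hGπt, mul_sub]
    nlinarith [mul_nonneg hκ0.le hKL0]
  · rw [hGρ, hGπt]
    constructor
    · intro h
      apply hKLeq.mp
      rw [mul_sub] at h
      have hz : κ * KL ρ πt = 0 := by linarith
      rcases mul_eq_zero.mp hz with h' | h'
      · exact absurd h' hκ0.ne'
      · exact h'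
    · intro h
      rw [h, (gibbs (fun a => (hπt_pos a).le) hπt_sum hπt_pos hπt_sum).2.mpr rfl, sub_zero]
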